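/- In the linear regression setup, with the estimated residuals ε̂_n = y_n − X_n β̂_n and the projection Π = X_n(X_nᵀX_n)⁻¹X_nᵀ, the squared 2-Wasserstein distance between the empirical distribution F_n of the true residuals and the centered empirical distribution F̂_n of the estimated residuals satisfies d₂(F_n, F̂_n)² ≤ ((1/n) 𝟙ᵀ ε_n)² + (1/n) ‖ε̂_n − ε_n‖₂², and ‖ε̂_n − ε_n‖₂ = ‖Π ε_n‖₂. -/
import Mathlib


open MeasureTheory Matrix
open scoped ENNReal NNReal BigOperators

noncomputable section

/-- Euclidean norm on `Fin d → ℝ`. -/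
def euclNorm {d : ℕ} (v : Fin d → ℝ) : ℝ := Real.sqrt (∑ i, v i ^ 2)

/-- `q`-Wasserstein distance between measures on `Fin d → ℝ` (Euclidean norm cost). -/
def wassE (q : ℝ) {d : ℕ} (μ ν : Measure (Fin d → ℝ)) : ℝ :=
  sInf { r : ℝ | ∃ γ : Measure ((Fin d → ℝ) × (Fin d → ℝ)),
    γ.map Prod.fst = μ ∧ γ.map Prod.snd = ν ∧
    r = (∫ z, euclNorm (z.1 - z.2) ^ q ∂γ) ^ (1 / q) }

/-- `q`-Wasserstein distance between measures on `ℝ`. -/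
def wassR (q : ℝ) (μ ν : Measure ℝ) : ℝ :=
  sInf { r : ℝ | ∃ γ : Measure (ℝ × ℝ),
    γ.map Prod.fst = μ ∧ γ.map Prod.snd = ν ∧
    r = (∫ z, |z.1 - z.2| ^ q ∂γ) ^ (1 / q) }

/-- Empirical measure of `k` points. -/
def empMeasure {E : Type*} [MeasurableSpace E] {k : ℕ} (pts : Fin k → E) : Measure E :=
  (k : ℝ≥0∞)⁻¹ • ∑ i, Measure.dirac (pts i)

instance empMeasure.instIsFiniteMeasure {E : Type*} [MeasurableSpace E] {k : ℕ}
    (pts : Fin k → E) : IsFiniteMeasure (empMeasure pts) := by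
  constructor
  have h : (∑ i, Measure.dirac (pts i)) Set.univ = (k : ℝ≥0∞) := by
    simp [Measure.finset_sum_apply]
  rw [empMeasure, Measure.smul_apply, h, smul_eq_mul]
  by_cases hk : k = 0
  · subst hk; simp
  · rw [ENNReal.inv_mul_cancel (by exact_mod_cast hk) (ENNReal.natCast_ne_top k)]
    exact ENNReal.one_lt_top

/-- Spectral norm (operator norm w.r.t. Euclidean norms). -/
def specNorm {m n : ℕ} (A : Matrix (Fin m) (Fin n) ℝ) : ℝ :=
  ‖LinearMap.toContinuousLinearMap (Matrix.toEuclideanLin A)‖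

/-- Orlicz (quasi-)norm of order `α` of the identity under a distribution `F` on `ℝ`. -/
def orlicz (α : ℝ) (F : Measure ℝ) : ℝ :=
  sInf { t : ℝ | 0 < t ∧ ∫ x, Real.exp ((|x| / t) ^ α) ∂F ≤ 2 }

/-- The OLS map `(XᵀX)⁻¹Xᵀ`. -/
def olsM {n p : ℕ} (X : Matrix (Fin n) (Fin p) ℝ) : Matrix (Fin p) (Fin n) ℝ :=
  (Xᵀ * X)⁻¹ * Xᵀ

/-- Center a vector by subtracting the mean of its entries. -/
def center {n : ℕ} (v : Fin n → ℝ) : Fin n → ℝ := fun i => v i - (∑ j, v j) / n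

/-- Projection onto the column space of `X`. -/
def projMat {n p : ℕ} (X : Matrix (Fin n) (Fin p) ℝ) : Matrix (Fin n) (Fin n) ℝ :=
  X * (Xᵀ * X)⁻¹ * Xᵀ

/-- The matrix `(1/n)𝟙𝟙ᵀ + Π`. -/
def covMat {n p : ℕ} (X : Matrix (Fin n) (Fin p) ℝ) : Matrix (Fin n) (Fin n) ℝ :=
  (n : ℝ)⁻¹ • Matrix.of (fun _ _ => (1 : ℝ)) + projMat X

/-- Uniform distribution on `Fin n`. -/
def unifFin (n : ℕ) : Measure (Fin n) := empMeasure (fun i : Fin n => i)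


lemma empMeasure_map' {E F : Type*} [MeasurableSpace E] [MeasurableSpace F] {k : ℕ}
    (pts : Fin k → E) {f : E → F} (hf : Measurable f) :
    (empMeasure pts).map f = empMeasure (fun i => f (pts i)) := by
  rw [empMeasure, Measure.map_smul, empMeasure]
  congr 1
  ext s hs
  rw [Measure.map_apply hf hs]
  simp [Measure.finset_sum_apply, Measure.dirac_apply' _ (hf hs), Measure.dirac_apply' _ hs,
    Set.indicator_apply, Set.mem_preimage]
  rfl

lemma integral_empMeasure' {E : Type*} [MeasurableSpace E] {k : ℕ} (pts : Fin k → E)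
    {g : E → ℝ} (hg : Measurable g) :
    ∫ x, g x ∂(empMeasure pts) = (k : ℝ)⁻¹ * ∑ i, g (pts i) := by
  rw [empMeasure, integral_smul_measure, integral_finset_sum_measure]
  · simp [integral_dirac' _ _ hg.stronglyMeasurable, ENNReal.toReal_inv]
  · intro i _
    exact (integrable_const (g (pts i))).congr (ae_eq_dirac' hg).symm

lemma freedman_alg (n : ℕ) (ε r : Fin n → ℝ) :
    (n:ℝ)⁻¹ * ∑ i, (ε i - (r i - (∑ j, r j)/n))^2 ≤
      ((∑ i, ε i)/n)^2 + (n:ℝ)⁻¹ * ∑ i, (r i - ε i)^2 := by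
  rcases Nat.eq_zero_or_pos n with h0 | hn
  · subst h0; simp
  have hn' : (0:ℝ) < n := by exact_mod_cast hn
  set a := ∑ i, ε i with ha
  set b := ∑ i, r i with hb
  have e1 : ∑ i, (ε i - (r i - b/n))^2
      = (∑ i, (r i - ε i)^2) + 2*(b/n)*(a - b) + n * (b/n)^2 := by
    have h : ∀ i : Fin n, (ε i - (r i - b/n))^2
        = (r i - ε i)^2 + 2*(b/n)*(ε i - r i) + (b/n)^2 := fun i => by ring
    rw [Finset.sum_congr rfl (fun i _ => h i)]
    simp only [Finset.sum_add_distrib, ← Finset.mul_sum, Finset.sum_sub_distrib,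
      Finset.sum_const, Finset.card_univ, Fintype.card_fin, nsmul_eq_mul, ← ha, ← hb]
  rw [e1]
  have h3 : (0:ℝ) < (n:ℝ)^2 := by positivity
  have eq1 : (n:ℝ)⁻¹ * ((∑ i, (r i - ε i)^2) + 2*(b/n)*(a - b) + n * (b/n)^2)
      = (n:ℝ)⁻¹ * (∑ i, (r i - ε i)^2) + (2*b*(a-b) + b^2)/(n:ℝ)^2 := by
    field_simp; ring
  have eq3 : (a/(n:ℝ))^2 = a^2/(n:ℝ)^2 := div_pow a _ 2
  rw [eq1, eq3]
  have key : (2*b*(a-b) + b^2)/(n:ℝ)^2 ≤ a^2/(n:ℝ)^2 := by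
    rw [div_le_div_iff₀ h3 h3]; nlinarith [sq_nonneg (a - b), h3]
  linarith

/-- equations (2.3)–(2.4) of Freedman, and the projection identity:
`d₂(F_n, F̂_n)² ≤ ((1/n)𝟙ᵀε)² + (1/n)‖ε̂ − ε‖₂²` and `‖ε̂ − ε‖₂ = ‖Πε‖₂`. -/
theorem stmt9 (n p : ℕ) (X : Matrix (Fin n) (Fin p) ℝ) (hX : X.rank = p)
    (β : Fin p → ℝ) (ε : Fin n → ℝ) :
    let y := X.mulVec β + ε
    let bhat := (olsM X).mulVec y
    let rhat := y - X.mulVec bhat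
    wassR 2 (empMeasure ε) (empMeasure (center rhat)) ^ 2 ≤
        ((∑ i, ε i) / n) ^ 2 + (n : ℝ)⁻¹ * euclNorm (rhat - ε) ^ 2 ∧
      euclNorm (rhat - ε) = euclNorm ((projMat X).mulVec ε) := by
  
  intro y bhat rhat
  -- invertibility of XᵀX
  have hunit : IsUnit (Xᵀ * X) := by
    have hr : (Xᵀ * X).rank = p := by rw [Matrix.rank_transpose_mul_self, hX]
    apply Matrix.mulVec_surjective_iff_isUnit.mp
    have htop : LinearMap.range (Xᵀ * X).mulVecLin = ⊤ := by
      apply Submodule.eq_top_of_finrank_eq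
      rw [show Module.finrank ℝ ↥(LinearMap.range (Xᵀ * X).mulVecLin) = (Xᵀ * X).rank from rfl,
        hr, Module.finrank_fintype_fun_eq_card, Fintype.card_fin]
    exact fun v => (LinearMap.range_eq_top.mp htop) v
  have hinv : (Xᵀ * X)⁻¹ * (Xᵀ * X) = 1 :=
    Matrix.nonsing_inv_mul _ ((Matrix.isUnit_iff_isUnit_det _).mp hunit)
  -- rhat - ε = -Πε
  have hXols : X * olsM X = projMat X := by rw [olsM, projMat, Matrix.mul_assoc]
  have hPX : projMat X * X = X := by
    rw [projMat, Matrix.mul_assoc (X * (Xᵀ * X)⁻¹), Matrix.mul_assoc X, hinv, Matrix.mul_one]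
  have hb : X.mulVec bhat = (projMat X).mulVec y := by
    show X.mulVec ((olsM X).mulVec y) = _
    rw [Matrix.mulVec_mulVec, hXols]
  have hPy : (projMat X).mulVec y = X.mulVec β + (projMat X).mulVec ε := by
    show (projMat X).mulVec (X.mulVec β + ε) = _
    rw [Matrix.mulVec_add, Matrix.mulVec_mulVec, hPX]
  have hrhat : rhat - ε = -((projMat X).mulVec ε) := by
    show y - X.mulVec bhat - ε = _
    rw [hb, hPy]
    show (X.mulVec β + ε) - (X.mulVec β + (projMat X).mulVec ε) - ε = _
    abel
  have hnorm : euclNorm (rhat - ε) = euclNorm ((projMat X).mulVec ε) := by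
    rw [hrhat]
    simp [euclNorm, Pi.neg_apply, neg_sq]
  refine ⟨?_, hnorm⟩
  -- the coupling
  set c : Fin n → ℝ := center rhat with hc
  set γ : Measure (ℝ × ℝ) := empMeasure (fun i => ((ε i, c i) : ℝ × ℝ)) with hγ
  have hmeas : Measurable (fun z : ℝ × ℝ => |z.1 - z.2| ^ (2:ℝ)) :=
    ((measurable_fst.sub measurable_snd).abs).pow_const _
  have hI : (∫ z, |z.1 - z.2| ^ (2:ℝ) ∂γ) = (n:ℝ)⁻¹ * ∑ i, (ε i - c i)^2 := by
    rw [hγ, integral_empMeasure' _ hmeas]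
    congr 1
    refine Finset.sum_congr rfl fun i _ => ?_
    rw [show ((2:ℝ)) = ((2:ℕ):ℝ) by norm_num, Real.rpow_natCast, sq_abs]
  have hI0 : 0 ≤ (∫ z, |z.1 - z.2| ^ (2:ℝ) ∂γ) :=
    integral_nonneg fun z => Real.rpow_nonneg (abs_nonneg _) _
  set r₀ : ℝ := (∫ z, |z.1 - z.2| ^ (2:ℝ) ∂γ) ^ ((1:ℝ)/2) with hr₀
  have hmem : r₀ ∈ { r : ℝ | ∃ γ' : Measure (ℝ × ℝ),
      γ'.map Prod.fst = empMeasure ε ∧ γ'.map Prod.snd = empMeasure (center rhat) ∧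
      r = (∫ z, |z.1 - z.2| ^ (2:ℝ) ∂γ') ^ (1 / (2:ℝ)) } := by
    refine ⟨γ, ?_, ?_, rfl⟩
    · rw [hγ, empMeasure_map' _ measurable_fst]
    · rw [hγ, empMeasure_map' _ measurable_snd]
  have hbdd : BddBelow { r : ℝ | ∃ γ' : Measure (ℝ × ℝ),
      γ'.map Prod.fst = empMeasure ε ∧ γ'.map Prod.snd = empMeasure (center rhat) ∧
      r = (∫ z, |z.1 - z.2| ^ (2:ℝ) ∂γ') ^ (1 / (2:ℝ)) } := by
    refine ⟨0, fun r hr => ?_⟩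
    obtain ⟨γ', -, -, rfl⟩ := hr
    exact Real.rpow_nonneg (integral_nonneg fun z => Real.rpow_nonneg (abs_nonneg _) _) _
  have hW0 : 0 ≤ wassR 2 (empMeasure ε) (empMeasure (center rhat)) := by
    refine le_csInf ⟨r₀, hmem⟩ fun r hr => ?_
    obtain ⟨γ', -, -, rfl⟩ := hr
    exact Real.rpow_nonneg (integral_nonneg fun z => Real.rpow_nonneg (abs_nonneg _) _) _
  have hWle : wassR 2 (empMeasure ε) (empMeasure (center rhat)) ≤ r₀ := csInf_le hbdd hmem
  have hr₀sq : r₀ ^ 2 = (n:ℝ)⁻¹ * ∑ i, (ε i - c i)^2 := by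
    rw [hr₀, ← hI, ← Real.rpow_natCast _ 2, ← Real.rpow_mul hI0]
    norm_num
  have hWsq : wassR 2 (empMeasure ε) (empMeasure (center rhat)) ^ 2 ≤ r₀ ^ 2 :=
    pow_le_pow_left₀ hW0 hWle 2
  have hEn : euclNorm (rhat - ε) ^ 2 = ∑ i, (rhat i - ε i)^2 := by
    rw [euclNorm, Real.sq_sqrt (Finset.sum_nonneg fun i _ => sq_nonneg _)]
    rfl
  calc wassR 2 (empMeasure ε) (empMeasure (center rhat)) ^ 2
      ≤ (n:ℝ)⁻¹ * ∑ i, (ε i - c i)^2 := hr₀sq ▸ hWsq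
    _ ≤ ((∑ i, ε i)/n)^2 + (n:ℝ)⁻¹ * ∑ i, (rhat i - ε i)^2 := freedman_alg n ε rhat
    _ = ((∑ i, ε i)/n)^2 + (n:ℝ)⁻¹ * euclNorm (rhat - ε) ^ 2 := by rw [hEn]
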